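/- Let v₁ = (1/√2)(sin(π/8)|00⟩ + cos(π/8)|01⟩ + cos(π/8)|10⟩ - sin(π/8)|11⟩) and v₂ = (1/√2)(cos(π/8)|00⟩ - sin(π/8)|01⟩ + sin(π/8)|10⟩ + cos(π/8)|11⟩). For any real θ, φ, let ψ = cosθ·v₁ + sinθ·e^{iφ}·v₂, and set a₊ = |cosθ sin(π/8) + sinθ cos(π/8) e^{iφ}|², a₋ = |cosθ sin(π/8) - sinθ cos(π/8) e^{iφ}|². Then the base-2 Shannon entropy of the squared moduli of the four components of ψ in the product basis equals 1 + (1/2)h(a₊) + (1/2)h(a₋), and this quantity is strictly greater than 1. -/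

import Mathlib

open Matrix BigOperators Kronecker ComplexOrder

/-- Base-2 Shannon entropy of a probability vector, with the convention `0 · log 0 = 0`
(automatic since `Real.logb 2 0 = 0`). -/
noncomputable def shannon2 {n : Type*} [Fintype n] (p : n → ℝ) : ℝ :=
  -∑ i, p i * Real.logb 2 (p i)

/-- A density matrix: positive semidefinite with unit trace. -/
def IsDensityMatrix {n : Type*} [Fintype n] (ρ : Matrix n n ℂ) : Prop :=
  ρ.PosSemidef ∧ ρ.trace = 1

/-- Von Neumann entropy (base 2): Shannon entropy of the eigenvalues. -/
noncomputable def vN {n : Type*} [Fintype n] [DecidableEq n] (ρ : Matrix n n ℂ) : ℝ :=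
  if h : ρ.IsHermitian then shannon2 h.eigenvalues else 0

/-- Relative entropy of coherence `C_r(ρ) = S(Δ(ρ)) - S(ρ)`, where `Δ` is the
diagonal part. -/
noncomputable def Cr {n : Type*} [Fintype n] [DecidableEq n] (ρ : Matrix n n ℂ) : ℝ :=
  vN (Matrix.diagonal ρ.diag) - vN ρ

/-- Application of a channel given by its Kraus operators: `ρ ↦ ∑ i, K i * ρ * (K i)ᴴ`. -/
noncomputable def krausApply {ι m p : Type*} [Fintype ι] [Fintype m] [Fintype p]
    (K : ι → Matrix p m ℂ) (ρ : Matrix m m ℂ) : Matrix p p ℂ :=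
  ∑ i, K i * ρ * (K i)ᴴ

/-- Coherence of formation: infimum over finite pure-state decompositions
`ρ = ∑ i, p i • |ψ i⟩⟨ψ i|` of `∑ i, p i * S(Δ(|ψ i⟩⟨ψ i|))`. -/
noncomputable def Cf {n : Type*} [Fintype n] (ρ : Matrix n n ℂ) : ℝ :=
  sInf { x : ℝ | ∃ (m : ℕ) (p : Fin m → ℝ) (ψ : Fin m → n → ℂ),
    (∀ i, 0 < p i) ∧ (∑ i, p i = 1) ∧ (∀ i, ∑ j, ‖ψ i j‖ ^ 2 = 1) ∧
    ρ = ∑ i, (p i : ℂ) • Matrix.vecMulVec (ψ i) (star (ψ i)) ∧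
    x = ∑ i, p i * shannon2 (fun j => ‖ψ i j‖ ^ 2) }

/-- Binary entropy function (base 2). -/
noncomputable def binEnt (x : ℝ) : ℝ :=
  -x * Real.logb 2 x - (1 - x) * Real.logb 2 (1 - x)

/-- `v₁ = (1/√2)(sin(π/8)|00⟩ + cos(π/8)|01⟩ + cos(π/8)|10⟩ - sin(π/8)|11⟩)`. -/
noncomputable def v1ex : Fin 2 × Fin 2 → ℂ := fun p =>
  (Real.sqrt 2 : ℂ)⁻¹ *
    !![(Real.sin (Real.pi / 8) : ℂ), (Real.cos (Real.pi / 8) : ℂ);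
       (Real.cos (Real.pi / 8) : ℂ), -(Real.sin (Real.pi / 8) : ℂ)] p.1 p.2

/-- `v₂ = (1/√2)(cos(π/8)|00⟩ - sin(π/8)|01⟩ + sin(π/8)|10⟩ + cos(π/8)|11⟩)`. -/
noncomputable def v2ex : Fin 2 × Fin 2 → ℂ := fun p =>
  (Real.sqrt 2 : ℂ)⁻¹ *
    !![(Real.cos (Real.pi / 8) : ℂ), -(Real.sin (Real.pi / 8) : ℂ);
       (Real.sin (Real.pi / 8) : ℂ), (Real.cos (Real.pi / 8) : ℂ)] p.1 p.2

/-- For `ψ = cos θ · v₁ + sin θ · e^{iφ} · v₂`, the base-2 Shannon entropy of the squared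
moduli of its four product-basis components equals `1 + h(a₊)/2 + h(a₋)/2 > 1`. -/
lemma half_term (t : ℝ) : -(t/2 * Real.logb 2 (t/2)) = t/2 - t/2 * Real.logb 2 t := by
  by_cases ht : t = 0
  · simp [ht]
  · rw [Real.logb_div ht two_ne_zero, Real.logb_self_eq_one one_lt_two]
    ring

lemma binEnt_nonneg {x : ℝ} (h0 : 0 ≤ x) (h1 : x ≤ 1) : 0 ≤ binEnt x := by
  have l1 : Real.logb 2 x ≤ 0 := Real.logb_nonpos one_lt_two h0 h1
  have l2 : Real.logb 2 (1-x) ≤ 0 := Real.logb_nonpos one_lt_two (by linarith) (by linarith)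
  unfold binEnt; nlinarith

lemma binEnt_pos {x : ℝ} (h0 : 0 < x) (h1 : x < 1) : 0 < binEnt x := by
  have l1 : Real.logb 2 x < 0 := Real.logb_neg one_lt_two h0 h1
  have l2 : Real.logb 2 (1-x) < 0 := Real.logb_neg one_lt_two (by linarith) (by linarith)
  unfold binEnt; nlinarith

lemma ent4 (p q : ℝ) :
    -(p/2 * Real.logb 2 (p/2)) - (1-p)/2 * Real.logb 2 ((1-p)/2)
      - (1-q)/2 * Real.logb 2 ((1-q)/2) - q/2 * Real.logb 2 (q/2)
    = 1 + binEnt p / 2 + binEnt q / 2 := by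
  have h1 := half_term p
  have h2 := half_term (1 - p)
  have h3 := half_term q
  have h4 := half_term (1 - q)
  unfold binEnt
  linarith

lemma sum_bounds (rt s c ct st : ℝ) (hrtpos : 0 ≤ rt)
    (hθ : st^2 + ct^2 = 1) (hs2 : s^2 = (2-rt)/4) (hc2 : c^2 = (2+rt)/4) :
    (2 - rt)/2 ≤ 2*(ct^2*s^2 + st^2*c^2) ∧ 2*(ct^2*s^2 + st^2*c^2) ≤ (2+rt)/2 := by
  constructor <;>
    nlinarith [mul_nonneg hrtpos (sq_nonneg st), mul_nonneg hrtpos (sq_nonneg ct)]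

lemma diff_bound (rt ct st x : ℝ) (hrt : rt^2 = 2) (hθ : st^2 + ct^2 = 1) (hx2 : x^2 ≤ 1) :
    (rt * (ct*st*x))^2 ≤ 1/2 := by
  have h1 : (ct*st)^2 ≤ 1/4 := by nlinarith [sq_nonneg (ct^2 - st^2)]
  have h2 : (ct*st*x)^2 ≤ 1/4 := by
    nlinarith [mul_nonneg (sq_nonneg (ct*st)) (by linarith : (0:ℝ) ≤ 1 - x^2)]
  calc (rt*(ct*st*x))^2 = rt^2 * (ct*st*x)^2 := by ring
    _ ≤ 2 * (1/4) := by rw [hrt]; linarith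
    _ ≤ 1/2 := by norm_num

lemma key_pos (rt p q : ℝ) (hrt2 : rt^2 = 2) (hrtpos : 0 ≤ rt)
    (hp0 : 0 ≤ p) (hp1 : p ≤ 1) (hq0 : 0 ≤ q) (hq1 : q ≤ 1)
    (hlo : (2-rt)/2 ≤ p+q) (hhi : p+q ≤ (2+rt)/2) (hd : (p-q)^2 ≤ 1/2) :
    0 < binEnt p + binEnt q := by
  have hrtlt : rt < 2 := by nlinarith
  by_cases h1 : 0 < p ∧ p < 1
  · have := binEnt_pos h1.1 h1.2
    have := binEnt_nonneg hq0 hq1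
    linarith
  · push_neg at h1
    have hpv : p = 0 ∨ p = 1 := by
      rcases lt_or_ge 0 p with h | h
      · right; linarith [h1 h]
      · left; linarith
    have h2 : 0 < q ∧ q < 1 := by
      rcases hpv with h | h
      · exact ⟨by linarith, by nlinarith⟩
      · exact ⟨by nlinarith, by linarith⟩
    have := binEnt_pos h2.1 h2.2
    have := binEnt_nonneg hp0 hp1
    linarith

lemma normsq_lin (a b : ℝ) (E : ℂ) (hE : Complex.normSq E = 1) :
    ‖(a:ℂ) + (b:ℂ) * E‖ ^ 2 = a^2 + b^2 + 2*a*b*E.re := by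
  rw [Complex.sq_norm, Complex.normSq_apply]
  simp only [Complex.add_re, Complex.add_im, Complex.ofReal_re, Complex.ofReal_im,
    Complex.mul_re, Complex.mul_im]
  rw [Complex.normSq_apply] at hE
  ring_nf
  nlinarith [hE]

set_option maxHeartbeats 1000000 in
theorem component_entropy_exceeds_one (θ φ : ℝ) :
    (shannon2 (fun j : Fin 2 × Fin 2 =>
        ‖(Real.cos θ : ℂ) * v1ex j +
          (Real.sin θ : ℂ) * Complex.exp ((φ : ℂ) * Complex.I) * v2ex j‖ ^ 2) =
      1 + binEnt (‖(Real.cos θ : ℂ) * (Real.sin (Real.pi / 8) : ℂ) +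
          (Real.sin θ : ℂ) * (Real.cos (Real.pi / 8) : ℂ) *
            Complex.exp ((φ : ℂ) * Complex.I)‖ ^ 2) / 2 +
        binEnt (‖(Real.cos θ : ℂ) * (Real.sin (Real.pi / 8) : ℂ) -
          (Real.sin θ : ℂ) * (Real.cos (Real.pi / 8) : ℂ) *
            Complex.exp ((φ : ℂ) * Complex.I)‖ ^ 2) / 2) ∧
    1 < shannon2 (fun j : Fin 2 × Fin 2 =>
        ‖(Real.cos θ : ℂ) * v1ex j +
          (Real.sin θ : ℂ) * Complex.exp ((φ : ℂ) * Complex.I) * v2ex j‖ ^ 2) := by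
  have hsqrt2pos : (0:ℝ) < Real.sqrt 2 := Real.sqrt_pos.mpr (by norm_num)
  have hsq2 : Real.sqrt 2 ^ 2 = 2 := Real.sq_sqrt (by norm_num)
  have hsqrt2lt : Real.sqrt 2 < 2 := by nlinarith
  set s := Real.sin (Real.pi/8) with hs_def
  set c := Real.cos (Real.pi/8) with hc_def
  set ct := Real.cos θ with hct_def
  set st := Real.sin θ with hst_def
  set E := Complex.exp ((φ:ℂ) * Complex.I) with hE_def
  set x := Real.cos φ with hx_def
  have hE : Complex.normSq E = 1 := by
    rw [hE_def, Complex.normSq_eq_norm_sq, Complex.norm_exp_ofReal_mul_I]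
    norm_num
  have hEre : E.re = x := by
    rw [hE_def, hx_def, Complex.exp_ofReal_mul_I_re]
  have hθpyth : st^2 + ct^2 = 1 := Real.sin_sq_add_cos_sq θ
  have h8pyth : s^2 + c^2 = 1 := Real.sin_sq_add_cos_sq _
  have hx2 : x^2 ≤ 1 := by rw [hx_def]; exact Real.cos_sq_le_one φ
  have hsc : s * c = Real.sqrt 2 / 4 := by
    have h1 : Real.sin (2 * (Real.pi/8)) = 2 * s * c := Real.sin_two_mul _
    have h2 : (2:ℝ) * (Real.pi/8) = Real.pi/4 := by ring
    rw [h2, Real.sin_pi_div_four] at h1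
    linarith
  have hs2v : s^2 = (2 - Real.sqrt 2)/4 := by
    rw [hs_def, Real.sin_pi_div_eight, div_pow,
      Real.sq_sqrt (by linarith : (0:ℝ) ≤ 2 - Real.sqrt 2)]
    norm_num
  have hc2v : c^2 = (2 + Real.sqrt 2)/4 := by linear_combination h8pyth - hs2v
  set aP := (ct*s)^2 + (st*c)^2 + 2*(ct*s)*(st*c)*x with haP_def
  set aM := (ct*s)^2 + (st*c)^2 - 2*(ct*s)*(st*c)*x with haM_def
  have hargP : ‖(ct:ℂ) * (s:ℂ) + (st:ℂ) * (c:ℂ) * E‖^2 = aP := by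
    have h : ((ct:ℂ) * (s:ℂ) + (st:ℂ) * (c:ℂ) * E) = (((ct*s:ℝ):ℂ) + ((st*c:ℝ):ℂ) * E) := by
      push_cast; ring
    rw [h, normsq_lin _ _ _ hE, hEre, haP_def]
  have hargM : ‖(ct:ℂ) * (s:ℂ) - (st:ℂ) * (c:ℂ) * E‖^2 = aM := by
    have h : ((ct:ℂ) * (s:ℂ) - (st:ℂ) * (c:ℂ) * E) = (((ct*s:ℝ):ℂ) + ((-(st*c):ℝ):ℂ) * E) := by
      push_cast; ring
    rw [h, normsq_lin _ _ _ hE, hEre, haM_def]; ring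
  have hhalf : ∀ z : ℂ, ‖(Real.sqrt 2 : ℂ)⁻¹ * z‖^2 = ‖z‖^2 / 2 := by
    intro z
    rw [norm_mul, norm_inv, Complex.norm_real, Real.norm_eq_abs,
      abs_of_nonneg (Real.sqrt_nonneg 2), mul_pow, inv_pow, hsq2]
    ring
  have e00 : ((ct:ℂ) * v1ex (0,0) + (st:ℂ) * E * v2ex (0,0))
      = (Real.sqrt 2 : ℂ)⁻¹ * (((ct*s:ℝ):ℂ) + ((st*c:ℝ):ℂ) * E) := by
    simp [v1ex, v2ex, ← hs_def, ← hc_def]; push_cast; ring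
  have e01 : ((ct:ℂ) * v1ex (0,1) + (st:ℂ) * E * v2ex (0,1))
      = (Real.sqrt 2 : ℂ)⁻¹ * (((ct*c:ℝ):ℂ) + ((-(st*s):ℝ):ℂ) * E) := by
    simp [v1ex, v2ex, ← hs_def, ← hc_def]; push_cast; ring
  have e10 : ((ct:ℂ) * v1ex (1,0) + (st:ℂ) * E * v2ex (1,0))
      = (Real.sqrt 2 : ℂ)⁻¹ * (((ct*c:ℝ):ℂ) + ((st*s:ℝ):ℂ) * E) := by
    simp [v1ex, v2ex, ← hs_def, ← hc_def]; push_cast; ring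
  have e11 : ((ct:ℂ) * v1ex (1,1) + (st:ℂ) * E * v2ex (1,1))
      = (Real.sqrt 2 : ℂ)⁻¹ * (((-(ct*s):ℝ):ℂ) + ((st*c:ℝ):ℂ) * E) := by
    simp [v1ex, v2ex, ← hs_def, ← hc_def]; push_cast; ring
  have p00 : ‖(ct:ℂ) * v1ex (0,0) + (st:ℂ) * E * v2ex (0,0)‖^2 = aP/2 := by
    rw [e00, hhalf, normsq_lin _ _ _ hE, hEre, haP_def]
  have p11 : ‖(ct:ℂ) * v1ex (1,1) + (st:ℂ) * E * v2ex (1,1)‖^2 = aM/2 := by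
    rw [e11, hhalf, normsq_lin _ _ _ hE, hEre, haM_def]; ring
  have hcompl1 : (ct*c)^2 + (-(st*s))^2 + 2*(ct*c)*(-(st*s))*x = 1 - aP := by
    rw [haP_def]; linear_combination ct^2*h8pyth + st^2*h8pyth + hθpyth
  have hcompl2 : (ct*c)^2 + (st*s)^2 + 2*(ct*c)*(st*s)*x = 1 - aM := by
    rw [haM_def]; linear_combination ct^2*h8pyth + st^2*h8pyth + hθpyth
  have p01 : ‖(ct:ℂ) * v1ex (0,1) + (st:ℂ) * E * v2ex (0,1)‖^2 = (1-aP)/2 := by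
    rw [e01, hhalf, normsq_lin _ _ _ hE, hEre, hcompl1]
  have p10 : ‖(ct:ℂ) * v1ex (1,0) + (st:ℂ) * E * v2ex (1,0)‖^2 = (1-aM)/2 := by
    rw [e10, hhalf, normsq_lin _ _ _ hE, hEre, hcompl2]
  have haP0 : 0 ≤ aP := by rw [← hargP]; positivity
  have haM0 : 0 ≤ aM := by rw [← hargM]; positivity
  have haP1 : aP ≤ 1 := by
    have h2 : (0:ℝ) ≤ ‖(ct:ℂ) * v1ex (0,1) + (st:ℂ) * E * v2ex (0,1)‖^2 := by positivity
    rw [p01] at h2; linarith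
  have haM1 : aM ≤ 1 := by
    have h2 : (0:ℝ) ≤ ‖(ct:ℂ) * v1ex (1,0) + (st:ℂ) * E * v2ex (1,0)‖^2 := by positivity
    rw [p10] at h2; linarith
  have hshannon : shannon2 (fun j : Fin 2 × Fin 2 =>
      ‖(ct:ℂ) * v1ex j + (st:ℂ) * E * v2ex j‖ ^ 2)
      = 1 + binEnt aP / 2 + binEnt aM / 2 := by
    have expand : shannon2 (fun j : Fin 2 × Fin 2 =>
        ‖(ct:ℂ) * v1ex j + (st:ℂ) * E * v2ex j‖ ^ 2)
        = -(aP/2 * Real.logb 2 (aP/2)) - (1-aP)/2 * Real.logb 2 ((1-aP)/2)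
          - (1-aM)/2 * Real.logb 2 ((1-aM)/2) - aM/2 * Real.logb 2 (aM/2) := by
      rw [shannon2, Fintype.sum_prod_type, Fin.sum_univ_two, Fin.sum_univ_two,
        Fin.sum_univ_two]
      simp only [p00, p01, p10, p11]
      ring
    rw [expand, ent4]
  have hsumB := sum_bounds (Real.sqrt 2) s c ct st hsqrt2pos.le hθpyth hs2v hc2v
  have hsum_eq : aP + aM = 2*(ct^2*s^2 + st^2*c^2) := by rw [haP_def, haM_def]; ring
  have hdiff_eq : aP - aM = Real.sqrt 2 * (ct*st*x) := by
    have h : aP - aM = 4*(s*c)*(ct*st*x) := by rw [haP_def, haM_def]; ring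
    rw [h, hsc]; ring
  have hdiffB : (aP - aM)^2 ≤ 1/2 := by
    rw [hdiff_eq]; exact diff_bound _ _ _ _ hsq2 hθpyth hx2
  have key := key_pos (Real.sqrt 2) aP aM hsq2 hsqrt2pos.le haP0 haP1 haM0 haM1
    (by rw [hsum_eq]; exact hsumB.1) (by rw [hsum_eq]; exact hsumB.2) hdiffB
  rw [hshannon, hargP, hargM]
  exact ⟨rfl, by linarith⟩
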